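/- arXiv:2503.23196 — 2 statements merged into one kernel-verified Lean document; each statement's English description precedes it below -/
import Mathlib

section
/- Let d1, d2 be integers with 1 < d1 < d2, let 𝒢 be the Sprague–Grundy function of i-MARK({1},{d1,d2}), and let d ∈ {d1,d2}. Suppose the positions n and n+1 are both d-conducive (i.e., d·n+1 and d·(n+1)+1 are bottlenecks) and n+1 is itself a bottleneck. Then for every starting position m with 0 < m < d·n and every guess seed σ for m, the guess sequence satisfies 𝒢_σ(j) = 𝒢(j) for all j ≥ d·(n+1)+1. -/
/-- The minimum excludant of a set of naturals. -/
noncomputable def mex (T : Set ℕ) : ℕ := sInf {k : ℕ | k ∉ T}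

/-- The set of followers of position `n` in the game i-MARK(S,D):
`n - s` for `s ∈ S` with `0 < s ≤ n`, and `n / d` for `d ∈ D` with `2 ≤ d`, `0 < n`, `d ∣ n`. -/
def followers (S D : Finset ℕ) (n : ℕ) : Finset ℕ :=
  ((S.filter fun s => 0 < s ∧ s ≤ n).image fun s => n - s) ∪
  ((D.filter fun d => 2 ≤ d ∧ 0 < n ∧ d ∣ n).image fun d => n / d)

theorem followers_lt {S D : Finset ℕ} {n m : ℕ} (h : m ∈ followers S D n) : m < n := by
  simp only [followers, Finset.mem_union, Finset.mem_image, Finset.mem_filter] at h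
  rcases h with ⟨s, ⟨-, hs, hsn⟩, rfl⟩ | ⟨d, ⟨-, hd, hn, -⟩, rfl⟩
  · omega
  · exact Nat.div_lt_self hn (by omega)

/-- The Sprague–Grundy function of i-MARK(S,D). -/
noncomputable def grundy (S D : Finset ℕ) : ℕ → ℕ
  | n => mex ↑((followers S D n).attach.image fun m => grundy S D m.1)
decreasing_by exact followers_lt m.2

/-- The number of followers of position `n` in i-MARK(S,D) (for positive `S` and `D` with
elements `≥ 2`): `φ(0) = 0` and `φ(n) = #{s ∈ S : s ≤ n} + #{d ∈ D : d ∣ n}` for `n > 0`. -/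
def numFollowers (S D : Finset ℕ) (n : ℕ) : ℕ :=
  if n = 0 then 0 else (S.filter fun s => s ≤ n).card + (D.filter fun d => d ∣ n).card

/-- `σ : ℕ → ℕ` is a guess seed for starting position `n` in i-MARK(S,D) if
`σ i ≤ φ(i)` for all `n ≤ i < n + max S` (values of `σ` outside this window are irrelevant). -/
def IsGuessSeed (S D : Finset ℕ) (n : ℕ) (σ : ℕ → ℕ) : Prop :=
  ∀ i, n ≤ i → i < n + S.sup id → σ i ≤ numFollowers S D i

/-- The guess sequence generated by seed `σ` from starting position `n`: it equals `σ` on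
`[n, n + max S)`, and from `n + max S` on it is computed by the mex rule, using guessed values
for subtraction followers and true Grundy values for division followers. -/
noncomputable def guessSeq (S D : Finset ℕ) (n : ℕ) (σ : ℕ → ℕ) : ℕ → ℕ
  | m =>
    if m < n + S.sup id then σ m
    else
      mex ((↑((S.filter fun t => 0 < t ∧ t ≤ m).attach.image
              fun t => guessSeq S D n σ (m - t.1)) : Set ℕ) ∪
        {g | ∃ d ∈ D, 2 ≤ d ∧ 0 < m ∧ d ∣ m ∧ g = grundy S D (m / d)})
decreasing_by
  have ht := t.2
  simp only [Finset.mem_filter] at ht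
  omega

/-- Convergence occurs in `c` steps at starting position `n`: any two guess sequences from `n`
agree on all positions `m` with `n + c ≤ m < n + c + max S`. -/
def ConvergesIn (S D : Finset ℕ) (n c : ℕ) : Prop :=
  ∀ σ σ' : ℕ → ℕ, IsGuessSeed S D n σ → IsGuessSeed S D n σ' →
    ∀ m, n + c ≤ m → m < n + c + S.sup id → guessSeq S D n σ m = guessSeq S D n σ' m

/-- division-follower grundy values -/
noncomputable def Dset (d₁ d₂ p : ℕ) : Set ℕ :=
  {g | ∃ d' ∈ ({d₁, d₂} : Finset ℕ), 2 ≤ d' ∧ 0 < p ∧ d' ∣ p ∧ g = grundy {1} {d₁, d₂} (p / d')}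

lemma mex_singleton_zero : mex {0} = 1 := by
  have h : mex {0} ∈ {k : ℕ | k ∉ ({0} : Set ℕ)} := Nat.sInf_mem ⟨1, by simp⟩
  have h2 : mex {0} ≤ 1 := Nat.sInf_le (by simp)
  simp only [Set.mem_setOf_eq, Set.mem_singleton_iff] at h
  omega

lemma mex_singleton_ne {x : ℕ} (hx : x ≠ 0) : mex {x} = 0 :=
  Nat.sInf_eq_zero.2 (Or.inl (by simp [hx.symm]))

lemma mex_ne_zero {T : Set ℕ} (h0 : 0 ∈ T) (hf : T.Finite) : mex T ≠ 0 := by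
  have hne : {k : ℕ | k ∉ T}.Nonempty := by
    have := hf.infinite_compl
    exact this.nonempty
  have := Nat.sInf_mem hne
  intro h
  rw [mex] at h
  rw [h] at this
  exact this h0

lemma grundy_rec (d₁ d₂ p : ℕ) (hp : 0 < p) :
    grundy {1} {d₁, d₂} p =
      mex ({grundy {1} {d₁, d₂} (p - 1)} ∪ Dset d₁ d₂ p) := by
  rw [grundy]
  congr 1
  ext g
  simp only [Finset.coe_image, Set.mem_image, Finset.mem_coe, Finset.mem_attach, true_and,
    Subtype.exists, Set.mem_union, Set.mem_singleton_iff, Dset, Set.mem_setOf_eq]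
  constructor
  · rintro ⟨x, hx, rfl⟩
    simp only [followers, Finset.mem_union, Finset.mem_image, Finset.mem_filter,
      Finset.mem_singleton] at hx
    rcases hx with ⟨s, ⟨rfl, -, hs⟩, rfl⟩ | ⟨d', hd', rfl⟩
    · left; rfl
    · right; exact ⟨d', hd'.1, hd'.2.1, hd'.2.2.1, hd'.2.2.2, rfl⟩
  · rintro (rfl | ⟨d', hd', h2, h0, hdvd, rfl⟩)
    · refine ⟨p - 1, ?_, rfl⟩
      simp only [followers, Finset.mem_union, Finset.mem_image, Finset.mem_filter,
        Finset.mem_singleton]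
      exact Or.inl ⟨1, ⟨rfl, by omega⟩, rfl⟩
    · refine ⟨p / d', ?_, rfl⟩
      simp only [followers, Finset.mem_union, Finset.mem_image, Finset.mem_filter]
      exact Or.inr ⟨d', ⟨hd', h2, h0, hdvd⟩, rfl⟩

lemma guessSeq_rec (d₁ d₂ m : ℕ) (σ : ℕ → ℕ) (j : ℕ) (hj : m + 1 ≤ j) :
    guessSeq {1} {d₁, d₂} m σ j =
      mex ({guessSeq {1} {d₁, d₂} m σ (j - 1)} ∪ Dset d₁ d₂ j) := by
  rw [guessSeq]
  rw [if_neg (by simp only [Finset.sup_singleton, id]; omega)]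
  congr 1
  ext g
  simp only [Set.mem_union, Finset.coe_image, Set.mem_image, Finset.mem_coe, Finset.mem_attach,
    true_and, Subtype.exists, Set.mem_singleton_iff, Dset, Set.mem_setOf_eq]
  constructor
  · rintro (⟨t, ht, rfl⟩ | h)
    · simp only [Finset.mem_filter, Finset.mem_singleton] at ht
      left; rw [ht.1]
    · right; exact h
  · rintro (rfl | h)
    · left
      refine ⟨1, ?_, rfl⟩
      rw [Finset.mem_filter]
      exact ⟨Finset.mem_singleton_self 1, by omega, by omega⟩
    · right; exact h

lemma Dset_finite (d₁ d₂ p : ℕ) : (Dset d₁ d₂ p).Finite := by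
  apply (Finset.finite_toSet (({d₁, d₂} : Finset ℕ).image fun d' => grundy {1} {d₁, d₂} (p / d'))).subset
  rintro g ⟨d', hd', -, -, -, rfl⟩
  simp only [Finset.coe_image, Set.mem_image, Finset.mem_coe]
  exact ⟨d', hd', rfl⟩

lemma Dset_empty {d₁ d₂ p : ℕ} (h1 : ¬ d₁ ∣ p) (h2 : ¬ d₂ ∣ p) : Dset d₁ d₂ p = ∅ := by
  ext g
  simp only [Dset, Set.mem_setOf_eq, Set.mem_empty_iff_false, iff_false]
  rintro ⟨d', hd', -, -, hdvd, -⟩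
  rcases Finset.mem_insert.1 hd' with rfl | hd'
  · exact h1 hdvd
  · rw [Finset.mem_singleton] at hd'
    subst hd'
    exact h2 hdvd

lemma merge (d₁ d₂ m : ℕ) (σ : ℕ → ℕ) (j0 : ℕ) (hm : m + 1 ≤ j0)
    (h : guessSeq {1} {d₁, d₂} m σ j0 = grundy {1} {d₁, d₂} j0) :
    ∀ j, j0 ≤ j → guessSeq {1} {d₁, d₂} m σ j = grundy {1} {d₁, d₂} j := by
  intro j hj
  induction j, hj using Nat.le_induction with
  | base => exact h
  | succ k hk ih =>
    rw [guessSeq_rec d₁ d₂ m σ (k + 1) (by omega), grundy_rec d₁ d₂ (k + 1) (by omega),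
      Nat.add_sub_cancel, ih]

/-- In i-MARK({1},{d₁,d₂}) with `1 < d₁ < d₂` and `d ∈ {d₁,d₂}`: if `n` and `n+1` are both
`d`-conducive (i.e. `d·n+1` and `d·(n+1)+1` are bottlenecks) and `n+1` is itself a bottleneck,
then every guess sequence starting at a position `0 < m < d·n` agrees with the true
Grundy function from position `d·(n+1)+1` on. -/
theorem guess_converges_after_conducive_pair (d₁ d₂ : ℕ) (h₁ : 1 < d₁) (h₂ : d₁ < d₂)
    (d : ℕ) (hd : d = d₁ ∨ d = d₂) (n : ℕ)
    (hconducive₁ : ¬ d₁ ∣ (d * n + 1) ∧ ¬ d₂ ∣ (d * n + 1))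
    (hconducive₂ : ¬ d₁ ∣ (d * (n + 1) + 1) ∧ ¬ d₂ ∣ (d * (n + 1) + 1))
    (hbottleneck : ¬ d₁ ∣ (n + 1) ∧ ¬ d₂ ∣ (n + 1)) :
    ∀ m : ℕ, 0 < m → m < d * n → ∀ σ : ℕ → ℕ, IsGuessSeed {1} {d₁, d₂} m σ →
      ∀ j : ℕ, d * (n + 1) + 1 ≤ j →
        guessSeq {1} {d₁, d₂} m σ j = grundy {1} {d₁, d₂} j := by
  intro m hm0 hmn σ hσ j hj
  have hd2 : 2 ≤ d := by rcases hd with rfl | rfl <;> omega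
  have hdmem : d ∈ ({d₁, d₂} : Finset ℕ) := by
    rcases hd with rfl | rfl <;> simp
  have hmul : d * (n + 1) = d * n + d := by ring
  have hfin : ∀ x p : ℕ, (({x} : Set ℕ) ∪ Dset d₁ d₂ p).Finite :=
    fun x p => (Set.finite_singleton x).union (Dset_finite d₁ d₂ p)
  by_cases hGn : grundy {1} {d₁, d₂} n = 0
  · -- merge already at d*n+1
    have h0 : (0 : ℕ) ∈ Dset d₁ d₂ (d * n) :=
      ⟨d, hdmem, hd2, by omega, dvd_mul_right d n,
        by rw [Nat.mul_div_cancel_left n (by omega), hGn]⟩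
    have hT' : guessSeq {1} {d₁, d₂} m σ (d * n) ≠ 0 := by
      rw [guessSeq_rec d₁ d₂ m σ (d * n) (by omega)]
      exact mex_ne_zero (Set.mem_union_right _ h0) (hfin _ _)
    have hT : grundy {1} {d₁, d₂} (d * n) ≠ 0 := by
      rw [grundy_rec d₁ d₂ (d * n) (by omega)]
      exact mex_ne_zero (Set.mem_union_right _ h0) (hfin _ _)
    have hmrg : guessSeq {1} {d₁, d₂} m σ (d * n + 1) = grundy {1} {d₁, d₂} (d * n + 1) := by
      rw [guessSeq_rec d₁ d₂ m σ (d * n + 1) (by omega), grundy_rec d₁ d₂ (d * n + 1) (by omega),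
        Dset_empty hconducive₁.1 hconducive₁.2, Set.union_empty, Set.union_empty,
        Nat.add_sub_cancel, mex_singleton_ne hT', mex_singleton_ne hT]
    exact merge d₁ d₂ m σ (d * n + 1) (by omega) hmrg j (by omega)
  · -- grundy (n+1) = 0, merge at d*(n+1)+1
    have hGn1 : grundy {1} {d₁, d₂} (n + 1) = 0 := by
      rw [grundy_rec d₁ d₂ (n + 1) (by omega), Dset_empty hbottleneck.1 hbottleneck.2,
        Set.union_empty, Nat.add_sub_cancel]
      exact mex_singleton_ne hGn
    have h0 : (0 : ℕ) ∈ Dset d₁ d₂ (d * (n + 1)) :=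
      ⟨d, hdmem, hd2, by omega, dvd_mul_right d (n + 1),
        by rw [Nat.mul_div_cancel_left (n + 1) (by omega), hGn1]⟩
    have hT' : guessSeq {1} {d₁, d₂} m σ (d * (n + 1)) ≠ 0 := by
      rw [guessSeq_rec d₁ d₂ m σ (d * (n + 1)) (by omega)]
      exact mex_ne_zero (Set.mem_union_right _ h0) (hfin _ _)
    have hT : grundy {1} {d₁, d₂} (d * (n + 1)) ≠ 0 := by
      rw [grundy_rec d₁ d₂ (d * (n + 1)) (by omega)]
      exact mex_ne_zero (Set.mem_union_right _ h0) (hfin _ _)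
    have hmrg : guessSeq {1} {d₁, d₂} m σ (d * (n + 1) + 1) =
        grundy {1} {d₁, d₂} (d * (n + 1) + 1) := by
      rw [guessSeq_rec d₁ d₂ m σ (d * (n + 1) + 1) (by omega),
        grundy_rec d₁ d₂ (d * (n + 1) + 1) (by omega),
        Dset_empty hconducive₂.1 hconducive₂.2, Set.union_empty, Set.union_empty,
        Nat.add_sub_cancel, mex_singleton_ne hT', mex_singleton_ne hT]
    exact merge d₁ d₂ m σ (d * (n + 1) + 1) (by omega) hmrg j hj
end

section
/- Let 𝒢 be the Sprague–Grundy function of i-MARK({1,3},{2,3}). For every n ≥ 6: if n mod 6 ∈ {0, 2, 4} then 𝒢(n) ≠ 0, and if n mod 6 ∈ {1, 5} then 𝒢(n) = 0. (That is, starting from position 6 the Grundy sequence has the form (N, 0, N, ?, N, 0) repeated forever, where N denotes a nonzero value and ? an arbitrary value.) -/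
/-! ### Auxiliary lemmas -/

lemma mex_eq_zero {T : Set ℕ} (h : 0 ∉ T) : mex T = 0 :=
  Nat.sInf_eq_zero.mpr (Or.inl h)

lemma mex_ne {T : Set ℕ} (hT : T.Finite) {k : ℕ} (h : k ∈ T) : mex T ≠ k := by
  have hne : {j : ℕ | j ∉ T}.Nonempty := by
    have := hT.infinite_compl
    exact this.nonempty
  have hmem : mex T ∈ {j : ℕ | j ∉ T} := Nat.sInf_mem hne
  intro heq
  rw [heq] at hmem
  exact hmem h

lemma grundy_eq (S D : Finset ℕ) (n : ℕ) :
    grundy S D n = mex ↑((followers S D n).attach.image fun m => grundy S D m.1) := by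
  rw [grundy]

lemma grundy_ne_zero {S D : Finset ℕ} {n : ℕ}
    (h : ∃ m ∈ followers S D n, grundy S D m = 0) : grundy S D n ≠ 0 := by
  rw [grundy_eq]
  apply mex_ne (Finset.finite_toSet _)
  obtain ⟨m, hm, hg⟩ := h
  simp only [Finset.coe_image, Set.mem_image, Finset.mem_coe, Finset.mem_attach, true_and,
    Subtype.exists]
  exact ⟨m, hm, hg⟩

lemma grundy_eq_zero {S D : Finset ℕ} {n : ℕ}
    (h : ∀ m ∈ followers S D n, grundy S D m ≠ 0) : grundy S D n = 0 := by
  rw [grundy_eq]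
  apply mex_eq_zero
  simp only [Finset.coe_image, Set.mem_image, Finset.mem_coe, Finset.mem_attach, true_and,
    Subtype.exists, not_exists]
  rintro m hm hg
  exact h m hm hg

lemma mem_followers_13_23 {n m : ℕ} :
    m ∈ followers {1, 3} {2, 3} n ↔
      (1 ≤ n ∧ m = n - 1) ∨ (3 ≤ n ∧ m = n - 3) ∨
      (0 < n ∧ 2 ∣ n ∧ m = n / 2) ∨ (0 < n ∧ 3 ∣ n ∧ m = n / 3) := by
  simp only [followers, Finset.mem_union, Finset.mem_image, Finset.mem_filter,
    Finset.mem_insert, Finset.mem_singleton]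
  constructor
  · rintro (⟨s, ⟨hs, h1, h2⟩, rfl⟩ | ⟨d, ⟨hd, h1, h2, h3⟩, rfl⟩)
    · rcases hs with rfl | rfl
      · exact Or.inl ⟨h2, rfl⟩
      · exact Or.inr (Or.inl ⟨h2, rfl⟩)
    · rcases hd with rfl | rfl
      · exact Or.inr (Or.inr (Or.inl ⟨h2, h3, rfl⟩))
      · exact Or.inr (Or.inr (Or.inr ⟨h2, h3, rfl⟩))
  · rintro (⟨h1, rfl⟩ | ⟨h1, rfl⟩ | ⟨h1, h2, rfl⟩ | ⟨h1, h2, rfl⟩)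
    · exact Or.inl ⟨1, ⟨Or.inl rfl, by omega, h1⟩, rfl⟩
    · exact Or.inl ⟨3, ⟨Or.inr rfl, by omega, h1⟩, rfl⟩
    · exact Or.inr ⟨2, ⟨Or.inl rfl, by omega, h1, h2⟩, rfl⟩
    · exact Or.inr ⟨3, ⟨Or.inr rfl, by omega, h1, h2⟩, rfl⟩

lemma grundy_one_ne : grundy {1, 3} {2, 3} 1 ≠ 0 := by
  apply grundy_ne_zero
  refine ⟨0, mem_followers_13_23.mpr (Or.inl ⟨le_refl 1, rfl⟩), ?_⟩
  apply grundy_eq_zero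
  intro m hm
  rw [mem_followers_13_23] at hm
  omega

lemma grundy_two : grundy {1, 3} {2, 3} 2 = 0 := by
  apply grundy_eq_zero
  intro m hm
  rw [mem_followers_13_23] at hm
  have : m = 1 := by omega
  subst this
  exact grundy_one_ne

lemma grundy_four_ne : grundy {1, 3} {2, 3} 4 ≠ 0 := by
  apply grundy_ne_zero
  exact ⟨2, mem_followers_13_23.mpr (Or.inr (Or.inr (Or.inl ⟨by omega, ⟨2, rfl⟩, rfl⟩))),
    grundy_two⟩

/-- In i-MARK({1,3},{2,3}), from position 6 on the Grundy sequence has the form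
`(N, 0, N, ?, N, 0)` repeated: positions `≡ 0, 2, 4 (mod 6)` have nonzero Grundy value and
positions `≡ 1, 5 (mod 6)` have Grundy value 0. -/
theorem imark_13_23_grundy_pattern (n : ℕ) (hn : 6 ≤ n) :
    ((n % 6 = 0 ∨ n % 6 = 2 ∨ n % 6 = 4) → grundy {1, 3} {2, 3} n ≠ 0) ∧
    ((n % 6 = 1 ∨ n % 6 = 5) → grundy {1, 3} {2, 3} n = 0) := by
  revert hn
  induction n using Nat.strong_induction_on with
  | _ n ih =>
  intro hn
  constructor
  · rintro (h | h | h)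
    · by_cases h6 : n = 6
      · subst h6
        exact grundy_ne_zero ⟨2,
          mem_followers_13_23.mpr (Or.inr (Or.inr (Or.inr ⟨by omega, ⟨2, rfl⟩, rfl⟩))),
          grundy_two⟩
      · exact grundy_ne_zero ⟨n - 1,
          mem_followers_13_23.mpr (Or.inl ⟨by omega, rfl⟩),
          (ih (n - 1) (by omega) (by omega)).2 (by omega)⟩
    · exact grundy_ne_zero ⟨n - 1,
        mem_followers_13_23.mpr (Or.inl ⟨by omega, rfl⟩),
        (ih (n - 1) (by omega) (by omega)).2 (by omega)⟩
    · exact grundy_ne_zero ⟨n - 3,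
        mem_followers_13_23.mpr (Or.inr (Or.inl ⟨by omega, rfl⟩)),
        (ih (n - 3) (by omega) (by omega)).2 (by omega)⟩
  · intro h
    apply grundy_eq_zero
    intro m hm
    rw [mem_followers_13_23] at hm
    rcases hm with ⟨h1, rfl⟩ | ⟨h1, rfl⟩ | ⟨h1, h2, rfl⟩ | ⟨h1, h2, rfl⟩
    · exact (ih (n - 1) (by omega) (by omega)).1 (by omega)
    · by_cases h7 : n = 7
      · subst h7
        exact grundy_four_ne
      · exact (ih (n - 3) (by omega) (by omega)).1 (by omega)
    · omega
    · omega
end
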